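/- Let 1 ≤ p < ∞, let w be a weight sequence with ∑_{n=1}^∞ 1/|w₁⋯w_n|^p < ∞, and let B_w be the associated weighted backward shift on X = ℓ_p(ℤ₊). Let m = ⊗_{n≥0} μ_n be a B_w-invariant product measure on ℓ_p (i.e. a B_w-invariant product probability measure on 𝕂^{ℤ₊} giving full measure to ℓ_p, restricted to ℓ_p). If the measure μ₀ has full support in 𝕂, then m is an ergodic measure with full support for B_w: m(U) > 0 for every non-empty open set U ⊆ X, and every Borel set A ⊆ X with B_w⁻¹(A) = A satisfies m(A) ∈ {0, 1}. -/

import Mathlib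

open MeasureTheory Filter
open scoped ENNReal NNReal

noncomputable instance {𝕂 : Type*} [RCLike 𝕂] {p : ℝ≥0∞} [Fact (1 ≤ p)] :
    MeasurableSpace (lp (fun _ : ℕ => 𝕂) p) := borel _

instance {𝕂 : Type*} [RCLike 𝕂] {p : ℝ≥0∞} [Fact (1 ≤ p)] :
    BorelSpace (lp (fun _ : ℕ => 𝕂) p) := ⟨rfl⟩


private lemma lp_sep {𝕂 : Type*} [RCLike 𝕂] (p : ℝ≥0∞) [Fact (1 ≤ p)] (hp : p ≠ ⊤) :
    TopologicalSpace.SeparableSpace (lp (fun _ : ℕ => 𝕂) p) := by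
  have hpt : 1 ≤ p.toReal := by
    have h := ENNReal.toReal_mono hp (Fact.out : 1 ≤ p)
    simpa using h
  have hpt0 : 0 < p.toReal := lt_of_lt_of_le one_pos hpt
  obtain ⟨d, hd⟩ : ∃ d : ℕ → 𝕂, DenseRange d := ⟨_, TopologicalSpace.denseRange_denseSeq 𝕂⟩
  have hmem : ∀ z : Σ N : ℕ, Fin N → ℕ,
      Memℓp (fun n => if h : n < z.1 then d (z.2 ⟨n, h⟩) else 0 : ∀ _ : ℕ, 𝕂) p := by
    intro z
    refine (memℓp_zero ?_).of_exponent_ge (zero_le : 0 ≤ p)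
    refine (Set.finite_Iio z.1).subset ?_
    intro n hn
    simp only [Set.mem_setOf_eq] at hn
    by_contra h
    simp only [Set.mem_Iio, not_lt] at h
    exact hn (by simp [Nat.not_lt.mpr h])
  set F : (Σ N : ℕ, Fin N → ℕ) → lp (fun _ : ℕ => 𝕂) p :=
    fun z => ⟨fun n => if h : n < z.1 then d (z.2 ⟨n, h⟩) else 0, hmem z⟩ with hF
  refine ⟨⟨Set.range F, Set.countable_range F, ?_⟩⟩
  rw [Metric.dense_iff]
  intro y r hr
  have hsum : Summable fun n => ‖(y : ∀ _ : ℕ, 𝕂) n‖ ^ p.toReal := (lp.memℓp y).summable hpt0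
  have htail : Tendsto (fun N => ∑' k, ‖(y : ∀ _ : ℕ, 𝕂) (k + N)‖ ^ p.toReal) atTop (nhds 0) :=
    _root_.tendsto_sum_nat_add (fun n => ‖(y : ∀ _ : ℕ, 𝕂) n‖ ^ p.toReal)
  have hr2 : 0 < (r / 2) ^ p.toReal := Real.rpow_pos_of_pos (by linarith) _
  obtain ⟨N, hN⟩ : ∃ N, ∑' k, ‖(y : ∀ _ : ℕ, 𝕂) (k + N)‖ ^ p.toReal < (r / 2) ^ p.toReal := by
    have := htail.eventually (eventually_lt_nhds hr2)  -- maybe wrong lemma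
    exact this.exists
  set δ : ℝ := min 1 ((r / 2) ^ p.toReal / (2 * (N + 1))) with hδ
  have hδ0 : 0 < δ := lt_min one_pos (by positivity)
  have hδ1 : δ ≤ 1 := min_le_left _ _
  have hg : ∀ i : Fin N, ∃ k, dist ((y : ∀ _ : ℕ, 𝕂) i) (d k) < δ := fun i =>
    hd.exists_dist_lt _ hδ0
  choose g hgd using hg
  refine ⟨F ⟨N, g⟩, ?_, Set.mem_range_self _⟩
  set s := F ⟨N, g⟩ with hs
  have hsn : ∀ n, (s : ∀ _ : ℕ, 𝕂) n = if h : n < N then d (g ⟨n, h⟩) else 0 := fun n => rfl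
  have hdiff : ∀ n, ‖((y - s : lp (fun _ : ℕ => 𝕂) p) : ∀ _ : ℕ, 𝕂) n‖
      = ‖(y : ∀ _ : ℕ, 𝕂) n - (s : ∀ _ : ℕ, 𝕂) n‖ := by
    intro n; rw [lp.coeFn_sub]; rfl
  have hsumd : Summable fun n => ‖((y - s : lp (fun _ : ℕ => 𝕂) p) : ∀ _ : ℕ, 𝕂) n‖ ^ p.toReal :=
    (lp.memℓp _).summable hpt0
  have hnorm : ‖y - s‖ ^ p.toReal
      = ∑' n, ‖((y - s : lp (fun _ : ℕ => 𝕂) p) : ∀ _ : ℕ, 𝕂) n‖ ^ p.toReal :=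
    lp.norm_rpow_eq_tsum hpt0 _
  have hsplit := Summable.sum_add_tsum_nat_add N hsumd
  -- bound head
  have hterm : ∀ n ∈ Finset.range N,
      ‖((y - s : lp (fun _ : ℕ => 𝕂) p) : ∀ _ : ℕ, 𝕂) n‖ ^ p.toReal ≤ δ := by
    intro n hn
    rw [Finset.mem_range] at hn
    have h1 : ‖((y - s : lp (fun _ : ℕ => 𝕂) p) : ∀ _ : ℕ, 𝕂) n‖ < δ := by
      rw [hdiff n, hsn n, dif_pos hn, ← dist_eq_norm]
      exact hgd ⟨n, hn⟩
    calc ‖((y - s : lp (fun _ : ℕ => 𝕂) p) : ∀ _ : ℕ, 𝕂) n‖ ^ p.toReal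
        ≤ δ ^ p.toReal := Real.rpow_le_rpow (norm_nonneg _) h1.le (le_of_lt hpt0)
      _ ≤ δ ^ (1 : ℝ) := Real.rpow_le_rpow_of_exponent_ge hδ0 hδ1 hpt
      _ = δ := Real.rpow_one δ
  have hhead : ∑ n ∈ Finset.range N, ‖((y - s : lp (fun _ : ℕ => 𝕂) p) : ∀ _ : ℕ, 𝕂) n‖ ^ p.toReal
      ≤ N * δ := by
    calc ∑ n ∈ Finset.range N, ‖((y - s : lp (fun _ : ℕ => 𝕂) p) : ∀ _ : ℕ, 𝕂) n‖ ^ p.toReal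
        ≤ ∑ _n ∈ Finset.range N, δ := Finset.sum_le_sum hterm
      _ = N * δ := by simp [mul_comm]
  have hheadlt : (N : ℝ) * δ < (r / 2) ^ p.toReal := by
    have h2 : δ ≤ (r / 2) ^ p.toReal / (2 * (N + 1)) := min_le_right _ _
    have h3 : (N : ℝ) * δ ≤ N * ((r / 2) ^ p.toReal / (2 * (N + 1))) := by
      apply mul_le_mul_of_nonneg_left h2 (Nat.cast_nonneg N)
    have h4 : (N : ℝ) * ((r / 2) ^ p.toReal / (2 * (N + 1))) < (r / 2) ^ p.toReal := by
      rw [mul_div_assoc']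
      rw [div_lt_iff₀ (by positivity)]
      have : (N : ℝ) < 2 * (N + 1) := by push_cast; linarith
      calc (N : ℝ) * (r / 2) ^ p.toReal = (r / 2) ^ p.toReal * N := mul_comm _ _
        _ < (r / 2) ^ p.toReal * (2 * (N + 1)) := by
            exact mul_lt_mul_of_pos_left this hr2
    linarith
  -- bound tail
  have htailval : ∑' k, ‖((y - s : lp (fun _ : ℕ => 𝕂) p) : ∀ _ : ℕ, 𝕂) (k + N)‖ ^ p.toReal
      < (r / 2) ^ p.toReal := by
    have : ∀ k : ℕ, ‖((y - s : lp (fun _ : ℕ => 𝕂) p) : ∀ _ : ℕ, 𝕂) (k + N)‖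
        = ‖(y : ∀ _ : ℕ, 𝕂) (k + N)‖ := by
      intro k
      rw [hdiff, hsn, dif_neg (by omega)]
      simp
    simpa only [this] using hN
  have hfinal : ‖y - s‖ ^ p.toReal < r ^ p.toReal := by
    have h2 : (2 : ℝ) * (r / 2) ^ p.toReal ≤ r ^ p.toReal := by
      have hrr : r = 2 * (r / 2) := by ring
      have : r ^ p.toReal = 2 ^ p.toReal * (r / 2) ^ p.toReal := by
        rw [← Real.mul_rpow (by norm_num) (by linarith), ← hrr]
      rw [this]
      have h22 : (2 : ℝ) ≤ 2 ^ p.toReal := by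
        calc (2 : ℝ) = 2 ^ (1 : ℝ) := (Real.rpow_one 2).symm
          _ ≤ 2 ^ p.toReal := Real.rpow_le_rpow_of_exponent_le (by norm_num) hpt
      exact mul_le_mul_of_nonneg_right h22 hr2.le
    rw [hnorm, ← hsplit]
    calc (∑ n ∈ Finset.range N, ‖((y - s : lp (fun _ : ℕ => 𝕂) p) : ∀ _ : ℕ, 𝕂) n‖ ^ p.toReal)
          + ∑' k, ‖((y - s : lp (fun _ : ℕ => 𝕂) p) : ∀ _ : ℕ, 𝕂) (k + N)‖ ^ p.toReal
        < N * δ + (r / 2) ^ p.toReal := by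
          apply add_lt_add_of_le_of_lt hhead htailval
      _ < (r / 2) ^ p.toReal + (r / 2) ^ p.toReal := by linarith
      _ = 2 * (r / 2) ^ p.toReal := by ring
      _ ≤ r ^ p.toReal := h2
  have : ‖y - s‖ < r := by
    by_contra hcon
    push_neg at hcon
    have := Real.rpow_le_rpow (by linarith) hcon hpt0.le
    linarith
  rw [Metric.mem_ball, dist_comm, dist_eq_norm]
  exact this

section Aux
variable {𝕂 : Type*} [RCLike 𝕂] (p : ℝ≥0∞) [Fact (1 ≤ p)]

private lemma pt_one_le (hp : p ≠ ⊤) : 1 ≤ p.toReal := by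
  have h := ENNReal.toReal_mono hp (Fact.out : 1 ≤ p)
  simpa using h

private lemma lp_coe_continuous :
    Continuous (fun x : lp (fun _ : ℕ => 𝕂) p => (x : ∀ _ : ℕ, 𝕂)) := by
  apply continuous_pi
  intro n
  have h : LipschitzWith 1 (fun x : lp (fun _ : ℕ => 𝕂) p => (x : ∀ _ : ℕ, 𝕂) n) := by
    intro x y
    rw [edist_nndist, edist_nndist]
    simp only [ENNReal.coe_one, one_mul, ENNReal.coe_le_coe, ← NNReal.coe_le_coe]
    have := lp.norm_apply_le_norm (by have : (1:ℝ≥0∞) ≤ p := Fact.out; intro h; simp [h] at this) (x - y) n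
    simpa [nndist_eq_nnnorm, dist_eq_norm, coe_nnnorm] using by
      simpa [lp.coeFn_sub] using this
  exact h.continuous

private lemma lp_tsum_eq (hp : p ≠ ⊤) (y c : lp (fun _ : ℕ => 𝕂) p) :
    (∑' n, ((‖(y : ∀ _ : ℕ, 𝕂) n - (c : ∀ _ : ℕ, 𝕂) n‖₊ : ℝ≥0∞)) ^ p.toReal)
      = ENNReal.ofReal (‖y - c‖ ^ p.toReal) := by
  have hpt0 : 0 < p.toReal := lt_of_lt_of_le one_pos (pt_one_le p hp)
  have hsum : Summable fun n => ‖((y - c : lp (fun _ : ℕ => 𝕂) p) : ∀ _ : ℕ, 𝕂) n‖ ^ p.toReal :=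
    (lp.memℓp _).summable hpt0
  rw [lp.norm_rpow_eq_tsum hpt0, ENNReal.ofReal_tsum_of_nonneg
    (fun n => Real.rpow_nonneg (norm_nonneg _) _) hsum]
  congr 1
  funext n
  have hc : ‖((y - c : lp (fun _ : ℕ => 𝕂) p) : ∀ _ : ℕ, 𝕂) n‖ = ‖(y : ∀ _ : ℕ, 𝕂) n - (c : ∀ _ : ℕ, 𝕂) n‖ := by
    rw [lp.coeFn_sub]; rfl
  rw [hc, ← ENNReal.ofReal_rpow_of_nonneg (norm_nonneg _) hpt0.le, ofReal_norm, enorm_eq_nnnorm]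

private lemma lp_ball_eq [MeasurableSpace 𝕂] [BorelSpace 𝕂] (hp : p ≠ ⊤)
    (c : lp (fun _ : ℕ => 𝕂) p) (r : ℝ) (hr : 0 < r) :
    Metric.ball c r = (fun x : lp (fun _ : ℕ => 𝕂) p => (x : ∀ _ : ℕ, 𝕂)) ⁻¹'
      {t : ℕ → 𝕂 | (∑' n, ((‖t n - (c : ∀ _ : ℕ, 𝕂) n‖₊ : ℝ≥0∞)) ^ p.toReal)
        < ENNReal.ofReal (r ^ p.toReal)} := by
  have hpt : 1 ≤ p.toReal := pt_one_le p hp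
  have hpt0 : 0 < p.toReal := lt_of_lt_of_le one_pos hpt
  ext y
  simp only [Metric.mem_ball, Set.mem_preimage, Set.mem_setOf_eq]
  rw [lp_tsum_eq p hp y c, ENNReal.ofReal_lt_ofReal_iff_of_nonneg
    (Real.rpow_nonneg (norm_nonneg _) _), dist_eq_norm]
  constructor
  · intro h
    exact Real.rpow_lt_rpow (norm_nonneg _) h hpt0
  · intro h
    by_contra hcon
    push_neg at hcon
    exact absurd (Real.rpow_le_rpow hr.le hcon hpt0.le) (not_le.mpr h)

private lemma lp_borel_le_comap [MeasurableSpace 𝕂] [BorelSpace 𝕂] (hp : p ≠ ⊤) :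
    (inferInstance : MeasurableSpace (lp (fun _ : ℕ => 𝕂) p)) ≤
      MeasurableSpace.comap (fun x : lp (fun _ : ℕ => 𝕂) p => (x : ∀ _ : ℕ, 𝕂))
        MeasurableSpace.pi := by
  haveI := lp_sep (𝕂 := 𝕂) p hp
  haveI : SecondCountableTopology (lp (fun _ : ℕ => 𝕂) p) :=
    UniformSpace.secondCountable_of_separable _
  have hbasis : TopologicalSpace.IsTopologicalBasis
      {s : Set (lp (fun _ : ℕ => 𝕂) p) | ∃ c r, 0 < r ∧ s = Metric.ball c r} := by
    apply TopologicalSpace.isTopologicalBasis_of_isOpen_of_nhds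
    · rintro s ⟨c, r, _, rfl⟩
      exact Metric.isOpen_ball
    · intro a u ha hu
      obtain ⟨r, hr, hball⟩ := Metric.isOpen_iff.mp hu a ha
      exact ⟨Metric.ball a r, ⟨a, r, hr, rfl⟩, Metric.mem_ball_self hr, hball⟩
  have : (inferInstance : MeasurableSpace (lp (fun _ : ℕ => 𝕂) p)) = borel _ :=
    BorelSpace.measurable_eq
  rw [this, hbasis.borel_eq_generateFrom]
  apply MeasurableSpace.generateFrom_le
  rintro s ⟨c, r, hr, rfl⟩
  rw [lp_ball_eq p hp c r hr]
  refine ⟨_, ?_, rfl⟩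
  apply measurableSet_lt ?_ measurable_const
  apply Measurable.ennreal_tsum
  intro n
  exact (ENNReal.continuous_rpow_const.measurable).comp
    (((measurable_pi_apply n).sub measurable_const).nnnorm.coe_nnreal_ennreal)

end Aux

section Meas
variable {𝕂 : Type*} [RCLike 𝕂] [MeasurableSpace 𝕂] [BorelSpace 𝕂]
  (p : ℝ≥0∞) [Fact (1 ≤ p)]

variable (w : ℕ → 𝕂)
  (B : lp (fun _ : ℕ => 𝕂) p →L[𝕂] lp (fun _ : ℕ => 𝕂) p)
  (m : Measure (lp (fun _ : ℕ => 𝕂) p)) [IsProbabilityMeasure m]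
  (μn : ℕ → Measure 𝕂)

private lemma cylinder_measurable (N : ℕ) (A : ℕ → Set 𝕂) (hA : ∀ n, MeasurableSet (A n)) :
    MeasurableSet {x : lp (fun _ : ℕ => 𝕂) p | ∀ n ≤ N, (x : ∀ _ : ℕ, 𝕂) n ∈ A n} := by
  have : {x : lp (fun _ : ℕ => 𝕂) p | ∀ n ≤ N, (x : ∀ _ : ℕ, 𝕂) n ∈ A n}
      = ⋂ n ∈ Set.Iic N, (fun x : lp (fun _ : ℕ => 𝕂) p => (x : ∀ _ : ℕ, 𝕂) n) ⁻¹' A n := by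
    ext x; simp [Set.mem_Iic]
  rw [this]
  exact MeasurableSet.biInter (Set.to_countable _)
    (fun n _ => (((measurable_pi_apply n).comp (lp_coe_continuous p).measurable)) (hA n))

private lemma marginal_rec (hμn : ∀ n, IsProbabilityMeasure (μn n))
    (hB : ∀ (x : lp (fun _ : ℕ => 𝕂) p) (n : ℕ),
        (B x : ∀ _ : ℕ, 𝕂) n = w (n + 1) * (x : ∀ _ : ℕ, 𝕂) (n + 1))
    (hprod : ∀ (N : ℕ) (A : ℕ → Set 𝕂), (∀ n, MeasurableSet (A n)) →
        m {x : lp (fun _ : ℕ => 𝕂) p | ∀ n ≤ N, (x : ∀ _ : ℕ, 𝕂) n ∈ A n} =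
          ∏ n ∈ Finset.range (N + 1), μn n (A n))
    (hinv : ∀ A : Set (lp (fun _ : ℕ => 𝕂) p), MeasurableSet A → m (B ⁻¹' A) = m A)
    (j : ℕ) (A : Set 𝕂) (hA : MeasurableSet A) :
    μn j A = μn (j + 1) ((fun c => w (j + 1) * c) ⁻¹' A) := by
  haveI := hμn
  classical
  set A1 : ℕ → Set 𝕂 := fun n => if n = j then A else Set.univ with hA1
  set A2 : ℕ → Set 𝕂 := fun n => if n = j + 1 then (fun c => w (j + 1) * c) ⁻¹' A else Set.univ
    with hA2
  have hA1m : ∀ n, MeasurableSet (A1 n) := by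
    intro n; rw [hA1]; dsimp only; split <;> simp [hA]
  have hA2m : ∀ n, MeasurableSet (A2 n) := by
    intro n; rw [hA2]; dsimp only; split
    · exact (measurable_const_mul _) hA
    · simp
  set C : Set (lp (fun _ : ℕ => 𝕂) p) := {x | ∀ n ≤ j, (x : ∀ _ : ℕ, 𝕂) n ∈ A1 n} with hC
  have hCm : MeasurableSet C := cylinder_measurable p j A1 hA1m
  have h1 : m C = μn j A := by
    rw [hC, hprod j A1 hA1m]
    rw [Finset.prod_eq_single j]
    · simp [hA1]
    · intro b _ hb; simp [hA1, hb, (hμn b).measure_univ]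
    · intro h; exact absurd (Finset.self_mem_range_succ j) h
  have hpre : B ⁻¹' C = {x : lp (fun _ : ℕ => 𝕂) p | ∀ n ≤ j + 1, (x : ∀ _ : ℕ, 𝕂) n ∈ A2 n} := by
    ext x
    simp only [Set.mem_preimage, hC, Set.mem_setOf_eq]
    constructor
    · intro h n hn
      by_cases hn2 : n = j + 1
      · subst hn2
        have hj := h j le_rfl
        rw [hA1] at hj; dsimp only at hj; rw [if_pos rfl] at hj
        rw [hB x j] at hj
        rw [hA2]; dsimp only; rw [if_pos rfl]
        exact hj
      · rw [hA2]; dsimp only; rw [if_neg hn2]; trivial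
    · intro h n hn
      by_cases hnj : n = j
      · rw [hA1]; dsimp only; rw [if_pos hnj, hB x n, hnj]
        have hj := h (j + 1) le_rfl
        rw [hA2] at hj; dsimp only at hj; rw [if_pos rfl] at hj
        exact hj
      · rw [hA1]; dsimp only; rw [if_neg hnj]; trivial
  have h2 : m (B ⁻¹' C) = μn (j + 1) ((fun c => w (j + 1) * c) ⁻¹' A) := by
    rw [hpre, hprod (j + 1) A2 hA2m]
    rw [Finset.prod_eq_single (j + 1)]
    · simp [hA2]
    · intro b _ hb; simp [hA2, hb, (hμn b).measure_univ]
    · intro h; exact absurd (Finset.self_mem_range_succ (j + 1)) h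
  rw [← h1, ← hinv C hCm, h2]

private lemma mu_fullsupport (hμn : ∀ n, IsProbabilityMeasure (μn n))
    (hw0 : ∀ n, 1 ≤ n → w n ≠ 0)
    (hB : ∀ (x : lp (fun _ : ℕ => 𝕂) p) (n : ℕ),
        (B x : ∀ _ : ℕ, 𝕂) n = w (n + 1) * (x : ∀ _ : ℕ, 𝕂) (n + 1))
    (hprod : ∀ (N : ℕ) (A : ℕ → Set 𝕂), (∀ n, MeasurableSet (A n)) →
        m {x : lp (fun _ : ℕ => 𝕂) p | ∀ n ≤ N, (x : ∀ _ : ℕ, 𝕂) n ∈ A n} =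
          ∏ n ∈ Finset.range (N + 1), μn n (A n))
    (hinv : ∀ A : Set (lp (fun _ : ℕ => 𝕂) p), MeasurableSet A → m (B ⁻¹' A) = m A)
    (hfull : ∀ U : Set 𝕂, IsOpen U → U.Nonempty → 0 < μn 0 U) :
    ∀ j, ∀ V : Set 𝕂, IsOpen V → V.Nonempty → 0 < μn j V := by
  intro j
  induction j with
  | zero => exact hfull
  | succ j ih =>
      intro V hV hVne
      have hwj : w (j + 1) ≠ 0 := hw0 (j + 1) (by omega)
      set e : 𝕂 ≃ₜ 𝕂 := Homeomorph.mulLeft₀ (w (j + 1)) hwj with he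
      have himg : (fun c => w (j + 1) * c) ⁻¹' (e '' V) = V := by
        have h1 : (fun c => w (j + 1) * c) ⁻¹' (e '' V) = e ⁻¹' (e '' V) := rfl
        rw [h1, Homeomorph.preimage_image]
      have hAopen : IsOpen (e '' V) := (Homeomorph.isOpen_image e).mpr hV
      have hmarg := marginal_rec p w B m μn hμn hB hprod hinv j (e '' V) hAopen.measurableSet
      rw [himg] at hmarg
      rw [← hmarg]
      exact ih _ hAopen (hVne.image _)

private lemma pi_cyl_measurable (N : ℕ) (A : ℕ → Set 𝕂) (hA : ∀ n, MeasurableSet (A n)) :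
    MeasurableSet {t : ℕ → 𝕂 | ∀ n ≤ N, t n ∈ A n} := by
  have : {t : ℕ → 𝕂 | ∀ n ≤ N, t n ∈ A n}
      = ⋂ n ∈ Set.Iic N, (fun t : ℕ → 𝕂 => t n) ⁻¹' A n := by
    ext t; simp [Set.mem_Iic]
  rw [this]
  exact MeasurableSet.biInter (Set.to_countable _)
    (fun n _ => (measurable_pi_apply n) (hA n))

private lemma mprime_cyl
    (hprod : ∀ (N : ℕ) (A : ℕ → Set 𝕂), (∀ n, MeasurableSet (A n)) →
        m {x : lp (fun _ : ℕ => 𝕂) p | ∀ n ≤ N, (x : ∀ _ : ℕ, 𝕂) n ∈ A n} =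
          ∏ n ∈ Finset.range (N + 1), μn n (A n))
    (N : ℕ) (A : ℕ → Set 𝕂) (hA : ∀ n, MeasurableSet (A n)) :
    (m.map (fun x : lp (fun _ : ℕ => 𝕂) p => (x : ∀ _ : ℕ, 𝕂)))
        {t : ℕ → 𝕂 | ∀ n ≤ N, t n ∈ A n} = ∏ n ∈ Finset.range (N + 1), μn n (A n) := by
  rw [Measure.map_apply (lp_coe_continuous p).measurable (pi_cyl_measurable N A hA)]
  exact hprod N A hA

private lemma coords_iIndep (hμn : ∀ n, IsProbabilityMeasure (μn n))
    (hprod : ∀ (N : ℕ) (A : ℕ → Set 𝕂), (∀ n, MeasurableSet (A n)) →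
        m {x : lp (fun _ : ℕ => 𝕂) p | ∀ n ≤ N, (x : ∀ _ : ℕ, 𝕂) n ∈ A n} =
          ∏ n ∈ Finset.range (N + 1), μn n (A n)) :
    ProbabilityTheory.iIndep
      (fun i : ℕ => MeasurableSpace.comap (fun t : ℕ → 𝕂 => t i) inferInstance)
      (m.map (fun x : lp (fun _ : ℕ => 𝕂) p => (x : ∀ _ : ℕ, 𝕂))) := by
  classical
  haveI : IsProbabilityMeasure (m.map (fun x : lp (fun _ : ℕ => 𝕂) p => (x : ∀ _ : ℕ, 𝕂))) :=
    Measure.isProbabilityMeasure_map (lp_coe_continuous p).measurable.aemeasurable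
  set m' := m.map (fun x : lp (fun _ : ℕ => 𝕂) p => (x : ∀ _ : ℕ, 𝕂)) with hm'
  -- the single-coordinate cylinder measure
  have hone : ∀ (i : ℕ) (A : Set 𝕂), MeasurableSet A →
      m' ((fun t : ℕ → 𝕂 => t i) ⁻¹' A) = μn i A := by
    intro i A hA
    have hseteq : (fun t : ℕ → 𝕂 => t i) ⁻¹' A
        = {t : ℕ → 𝕂 | ∀ n ≤ i, t n ∈ (fun n => if n = i then A else Set.univ) n} := by
      ext t
      simp only [Set.mem_preimage, Set.mem_setOf_eq]
      constructor
      · intro h n hn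
        by_cases hni : n = i
        · subst hni; simpa using h
        · simp [hni]
      · intro h
        have := h i le_rfl
        simpa using this
    have hAm : ∀ n, MeasurableSet ((fun n => if n = i then A else Set.univ) n) := by
      intro n; dsimp only; split <;> simp [hA]
    rw [hseteq, mprime_cyl p m μn hprod i _ hAm]
    rw [Finset.prod_eq_single i]
    · simp
    · intro b _ hb; haveI := hμn b; simp [hb, (hμn b).measure_univ]
    · intro h; exact absurd (Finset.self_mem_range_succ i) h
  apply ProbabilityTheory.iIndepSets.iIndep
    (π := fun i => Set.preimage (fun t : ℕ → 𝕂 => t i) '' {A : Set 𝕂 | MeasurableSet A})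
  · intro i
    exact (measurable_pi_apply i).comap_le
  · intro i
    rintro _ ⟨A, hA, rfl⟩ _ ⟨A', hA', rfl⟩ _
    exact ⟨A ∩ A', hA.inter hA', by rw [Set.preimage_inter]⟩
  · intro i
    exact MeasurableSpace.comap_eq_generateFrom _ _
  · rw [ProbabilityTheory.iIndepSets_iff]
    intro I f hf
    -- choose measurable sets
    choose! A hAm hfA using fun i (hi : i ∈ I) => hf i hi
    set A' : ℕ → Set 𝕂 := fun i => if i ∈ I then A i else Set.univ with hA'
    have hA'm : ∀ n, MeasurableSet (A' n) := by
      intro n; rw [hA']; dsimp only; split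
      · next h => exact hAm n h
      · simp
    have hfA' : ∀ i ∈ I, f i = (fun t : ℕ → 𝕂 => t i) ⁻¹' A' i := by
      intro i hi
      rw [hA']; dsimp only; rw [if_pos hi, ← hfA i hi]
    set N := I.sup id with hN
    have hseteq : (⋂ i ∈ I, f i) = {t : ℕ → 𝕂 | ∀ n ≤ N, t n ∈ A' n} := by
      ext t
      simp only [Set.mem_iInter, Set.mem_setOf_eq]
      constructor
      · intro h n hn
        by_cases hni : n ∈ I
        · have hmem := h n hni
          rw [hfA' n hni] at hmem
          exact hmem
        · rw [hA']; dsimp only; rw [if_neg hni]; trivial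
      · intro h i hi
        have hiN : i ≤ N := Finset.le_sup (f := id) hi
        rw [hfA' i hi]
        exact h i hiN
    rw [hseteq, mprime_cyl p m μn hprod N A' hA'm]
    have hsub : I ⊆ Finset.range (N + 1) := by
      intro i hi
      rw [Finset.mem_range]
      exact Nat.lt_succ_of_le (Finset.le_sup (f := id) hi)
    rw [← Finset.prod_subset hsub (fun x _ hx => by
      haveI := hμn x
      rw [hA']; dsimp only; rw [if_neg hx]; exact (hμn x).measure_univ)]
    apply Finset.prod_congr rfl
    intro i hi
    rw [hfA' i hi, hone i (A' i) (hA'm i)]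

set_option maxHeartbeats 1000000 in
private lemma full_support_main (hp : p ≠ ⊤) (hμn : ∀ n, IsProbabilityMeasure (μn n))
    (hw0 : ∀ n, 1 ≤ n → w n ≠ 0)
    (hB : ∀ (x : lp (fun _ : ℕ => 𝕂) p) (n : ℕ),
        (B x : ∀ _ : ℕ, 𝕂) n = w (n + 1) * (x : ∀ _ : ℕ, 𝕂) (n + 1))
    (hprod : ∀ (N : ℕ) (A : ℕ → Set 𝕂), (∀ n, MeasurableSet (A n)) →
        m {x : lp (fun _ : ℕ => 𝕂) p | ∀ n ≤ N, (x : ∀ _ : ℕ, 𝕂) n ∈ A n} =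
          ∏ n ∈ Finset.range (N + 1), μn n (A n))
    (hinv : ∀ A : Set (lp (fun _ : ℕ => 𝕂) p), MeasurableSet A → m (B ⁻¹' A) = m A)
    (hfull : ∀ U : Set 𝕂, IsOpen U → U.Nonempty → 0 < μn 0 U) :
    ∀ U : Set (lp (fun _ : ℕ => 𝕂) p), IsOpen U → U.Nonempty → 0 < m U := by
  classical
  intro U hU hUne
  have hpt : 1 ≤ p.toReal := pt_one_le p hp
  have hpt0 : 0 < p.toReal := lt_of_lt_of_le one_pos hpt
  set ι : lp (fun _ : ℕ => 𝕂) p → (ℕ → 𝕂) := fun x => (x : ∀ _ : ℕ, 𝕂) with hι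
  have hιm : Measurable ι := (lp_coe_continuous p).measurable
  set m' := m.map ι with hm'
  haveI : IsProbabilityMeasure m' := Measure.isProbabilityMeasure_map hιm.aemeasurable
  obtain ⟨x, hx⟩ := hUne
  obtain ⟨ε, hε, hball⟩ := Metric.isOpen_iff.mp hU x hx
  set E : ℝ≥0∞ := ENNReal.ofReal ((ε / 2) ^ p.toReal) with hE
  have hE0 : 0 < E := ENNReal.ofReal_pos.mpr (Real.rpow_pos_of_pos (by linarith) _)
  set T : ℕ → Set (ℕ → 𝕂) := fun N =>
    {t | (∑' k, ((‖t (k + (N + 1)) - (x : ∀ _ : ℕ, 𝕂) (k + (N + 1))‖₊ : ℝ≥0∞)) ^ p.toReal) < E}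
    with hT
  have hTfn : ∀ N, Measurable (fun t : ℕ → 𝕂 =>
      ∑' k, ((‖t (k + (N + 1)) - (x : ∀ _ : ℕ, 𝕂) (k + (N + 1))‖₊ : ℝ≥0∞)) ^ p.toReal) := by
    intro N
    apply Measurable.ennreal_tsum
    intro k
    exact (ENNReal.continuous_rpow_const.measurable).comp
      (((measurable_pi_apply (k + (N + 1))).sub measurable_const).nnnorm.coe_nnreal_ennreal)
  have hTm : ∀ N, MeasurableSet (T N) := fun N => measurableSet_lt (hTfn N) measurable_const
  -- some tail event has positive measure
  have hcover : ι ⁻¹' (⋃ N, T N) = Set.univ := by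
    rw [Set.eq_univ_iff_forall]
    intro y
    simp only [Set.mem_preimage, Set.mem_iUnion]
    have hfin : (∑' k, ((‖ι y k - (x : ∀ _ : ℕ, 𝕂) k‖₊ : ℝ≥0∞)) ^ p.toReal) ≠ ⊤ := by
      rw [hι]; rw [lp_tsum_eq p hp y x]; exact ENNReal.ofReal_ne_top
    have htail := ENNReal.tendsto_sum_nat_add
      (fun k => ((‖ι y k - (x : ∀ _ : ℕ, 𝕂) k‖₊ : ℝ≥0∞)) ^ p.toReal) hfin
    have hev := htail.eventually (eventually_lt_nhds hE0)
    obtain ⟨i₀, hi₀⟩ := hev.exists_forall_of_atTop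
    exact ⟨i₀, hi₀ (i₀ + 1) (by omega)⟩
  obtain ⟨N, hN⟩ : ∃ N, m' (T N) ≠ 0 := by
    by_contra hcon
    push_neg at hcon
    have h1 : m' (⋃ N, T N) = 0 := by
      exact le_antisymm (le_trans (measure_iUnion_le _) (by simp [hcon])) zero_le
    rw [hm', Measure.map_apply hιm (MeasurableSet.iUnion hTm), hcover] at h1
    simp at h1
  -- head cylinder
  set δ : ℝ := min 1 ((ε / 2) ^ p.toReal / (2 * (N + 1))) with hδ
  have hδ0 : 0 < δ := lt_min one_pos (by positivity)
  have hδ1 : δ ≤ 1 := min_le_left _ _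
  set C : Set (ℕ → 𝕂) := {t | ∀ n ≤ N, t n ∈ Metric.ball ((x : ∀ _ : ℕ, 𝕂) n) δ} with hC
  have hCball : ∀ n, MeasurableSet (Metric.ball ((x : ∀ _ : ℕ, 𝕂) n) δ) :=
    fun n => Metric.isOpen_ball.measurableSet
  have hCm : MeasurableSet C := pi_cyl_measurable N _ hCball
  have hCpos : 0 < m' C := by
    rw [hC, hm', mprime_cyl p m μn hprod N _ hCball]
    rw [CanonicallyOrderedAdd.prod_pos]
    intro n _
    exact mu_fullsupport p w B m μn hμn hw0 hB hprod hinv hfull n _ Metric.isOpen_ball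
      (Metric.nonempty_ball.mpr hδ0)
  -- independence
  set s : ℕ → MeasurableSpace (ℕ → 𝕂) :=
    fun i => MeasurableSpace.comap (fun t : ℕ → 𝕂 => t i) inferInstance with hs
  have hsle : ∀ i, s i ≤ MeasurableSpace.pi := fun i => (measurable_pi_apply i).comap_le
  have hindep := ProbabilityTheory.indep_iSup_of_disjoint hsle
    (coords_iIndep p m μn hμn hprod) (disjoint_compl_right (a := Set.Iic N))
  rw [ProbabilityTheory.Indep_iff] at hindep
  have hCmeas : MeasurableSet[⨆ i ∈ Set.Iic N, s i] C := by
    have : C = ⋂ n ∈ Set.Iic N, (fun t : ℕ → 𝕂 => t n) ⁻¹' Metric.ball ((x : ∀ _ : ℕ, 𝕂) n) δ := by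
      ext t; simp [hC, Set.mem_Iic]
    rw [this]
    refine MeasurableSet.biInter (Set.to_countable _) (fun n hn => ?_)
    exact (le_iSup₂ (f := fun i (_ : i ∈ Set.Iic N) => s i) n hn) _
      (MeasurableSpace.measurableSet_comap.mpr ⟨_, hCball n, rfl⟩)
  have hTmeas : MeasurableSet[⨆ i ∈ (Set.Iic N)ᶜ, s i] (T N) := by
    have hr : @Measurable (ℕ → 𝕂) (ℕ → 𝕂) (⨆ i ∈ (Set.Iic N)ᶜ, s i) MeasurableSpace.pi
        (fun t k => t (k + (N + 1))) := by
      simp_rw [measurable_iff_comap_le, MeasurableSpace.pi, MeasurableSpace.comap_iSup,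
        MeasurableSpace.comap_comp, Function.comp_def]
      exact iSup_le fun k => le_iSup₂ (f := fun i (_ : i ∈ (Set.Iic N)ᶜ) => s i)
        (k + (N + 1)) (by simp only [Set.mem_compl_iff, Set.mem_Iic, not_le]; omega)
    have hG : Measurable (fun u : ℕ → 𝕂 =>
        ∑' k, ((‖u k - (x : ∀ _ : ℕ, 𝕂) (k + (N + 1))‖₊ : ℝ≥0∞)) ^ p.toReal) := by
      apply Measurable.ennreal_tsum
      intro k
      exact (ENNReal.continuous_rpow_const.measurable).comp
        (((measurable_pi_apply k).sub measurable_const).nnnorm.coe_nnreal_ennreal)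
    have hfn : Measurable[⨆ i ∈ (Set.Iic N)ᶜ, s i] (fun t : ℕ → 𝕂 =>
        ∑' k, ((‖t (k + (N + 1)) - (x : ∀ _ : ℕ, 𝕂) (k + (N + 1))‖₊ : ℝ≥0∞)) ^ p.toReal) :=
      hG.comp hr
    exact hfn measurableSet_Iio
  have hmul : m' (C ∩ T N) = m' C * m' (T N) := hindep C (T N) hCmeas hTmeas
  have hpos : 0 < m' (C ∩ T N) := by
    rw [hmul]
    exact ENNReal.mul_pos hCpos.ne' hN
  -- inclusion into U
  have hincl : ι ⁻¹' (C ∩ T N) ⊆ U := by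
    intro y hy
    obtain ⟨hyC, hyT⟩ := hy
    apply hball
    rw [Metric.mem_ball, dist_eq_norm]
    -- real computations
    have hsumd : Summable fun n => ‖((y - x : lp (fun _ : ℕ => 𝕂) p) : ∀ _ : ℕ, 𝕂) n‖ ^ p.toReal :=
      (lp.memℓp _).summable hpt0
    have hdiff : ∀ n, ‖((y - x : lp (fun _ : ℕ => 𝕂) p) : ∀ _ : ℕ, 𝕂) n‖
        = ‖(y : ∀ _ : ℕ, 𝕂) n - (x : ∀ _ : ℕ, 𝕂) n‖ := by
      intro n; rw [lp.coeFn_sub]; rfl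
    have hnorm : ‖y - x‖ ^ p.toReal
        = ∑' n, ‖((y - x : lp (fun _ : ℕ => 𝕂) p) : ∀ _ : ℕ, 𝕂) n‖ ^ p.toReal :=
      lp.norm_rpow_eq_tsum hpt0 _
    have hsplit := Summable.sum_add_tsum_nat_add (N + 1) hsumd
    -- tail bound from hyT
    have htailsum : Summable fun k =>
        ‖((y - x : lp (fun _ : ℕ => 𝕂) p) : ∀ _ : ℕ, 𝕂) (k + (N + 1))‖ ^ p.toReal :=
      ((summable_nat_add_iff (N + 1)).mpr hsumd)
    have htailb : ∑' k, ‖((y - x : lp (fun _ : ℕ => 𝕂) p) : ∀ _ : ℕ, 𝕂) (k + (N + 1))‖ ^ p.toReal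
        < (ε / 2) ^ p.toReal := by
      have hofr : ENNReal.ofReal (∑' k,
          ‖((y - x : lp (fun _ : ℕ => 𝕂) p) : ∀ _ : ℕ, 𝕂) (k + (N + 1))‖ ^ p.toReal)
          = ∑' k, ((‖ι y (k + (N + 1)) - (x : ∀ _ : ℕ, 𝕂) (k + (N + 1))‖₊ : ℝ≥0∞)) ^ p.toReal := by
        rw [ENNReal.ofReal_tsum_of_nonneg (fun k => Real.rpow_nonneg (norm_nonneg _) _) htailsum]
        congr 1
        funext k
        rw [hdiff, ← ENNReal.ofReal_rpow_of_nonneg (norm_nonneg _) hpt0.le,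
          ofReal_norm, enorm_eq_nnnorm]
      have := hyT
      rw [hT] at this
      simp only [Set.mem_setOf_eq] at this
      rw [← hofr, hE] at this
      exact (ENNReal.ofReal_lt_ofReal_iff_of_nonneg (tsum_nonneg
        (fun k => Real.rpow_nonneg (norm_nonneg _) _))).mp this
    -- head bound from hyC
    have hheadb : ∑ n ∈ Finset.range (N + 1),
        ‖((y - x : lp (fun _ : ℕ => 𝕂) p) : ∀ _ : ℕ, 𝕂) n‖ ^ p.toReal < (ε / 2) ^ p.toReal := by
      have hterm : ∀ n ∈ Finset.range (N + 1),
          ‖((y - x : lp (fun _ : ℕ => 𝕂) p) : ∀ _ : ℕ, 𝕂) n‖ ^ p.toReal ≤ δ := by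
        intro n hn
        rw [Finset.mem_range] at hn
        have h1 : ‖((y - x : lp (fun _ : ℕ => 𝕂) p) : ∀ _ : ℕ, 𝕂) n‖ < δ := by
          rw [hdiff n, ← dist_eq_norm]
          exact hyC n (by omega)
        calc ‖((y - x : lp (fun _ : ℕ => 𝕂) p) : ∀ _ : ℕ, 𝕂) n‖ ^ p.toReal
            ≤ δ ^ p.toReal := Real.rpow_le_rpow (norm_nonneg _) h1.le hpt0.le
          _ ≤ δ ^ (1 : ℝ) := Real.rpow_le_rpow_of_exponent_ge hδ0 hδ1 hpt
          _ = δ := Real.rpow_one δ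
      have h2 : ∑ n ∈ Finset.range (N + 1),
          ‖((y - x : lp (fun _ : ℕ => 𝕂) p) : ∀ _ : ℕ, 𝕂) n‖ ^ p.toReal ≤ (N + 1) * δ := by
        calc _ ≤ ∑ _n ∈ Finset.range (N + 1), δ := Finset.sum_le_sum hterm
          _ = (N + 1) * δ := by simp [mul_comm]
      have h3 : ((N : ℝ) + 1) * δ < (ε / 2) ^ p.toReal := by
        have h4 : δ ≤ (ε / 2) ^ p.toReal / (2 * (N + 1)) := min_le_right _ _
        have h5 : ((N : ℝ) + 1) * δ ≤ ((N : ℝ) + 1) * ((ε / 2) ^ p.toReal / (2 * (N + 1))) :=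
          mul_le_mul_of_nonneg_left h4 (by positivity)
        have h6 : ((N : ℝ) + 1) * ((ε / 2) ^ p.toReal / (2 * (N + 1)))
            = (ε / 2) ^ p.toReal / 2 := by
          field_simp
        have h7 : (0 : ℝ) < (ε / 2) ^ p.toReal := Real.rpow_pos_of_pos (by linarith) _
        rw [h6] at h5
        linarith
      calc _ ≤ ((N : ℝ) + 1) * δ := by exact_mod_cast h2
        _ < (ε / 2) ^ p.toReal := h3
    have hfinal : ‖y - x‖ ^ p.toReal < ε ^ p.toReal := by
      have h2 : (2 : ℝ) * (ε / 2) ^ p.toReal ≤ ε ^ p.toReal := by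
        have hrr : ε = 2 * (ε / 2) := by ring
        have hsp : ε ^ p.toReal = 2 ^ p.toReal * (ε / 2) ^ p.toReal := by
          rw [← Real.mul_rpow (by norm_num) (by linarith), ← hrr]
        rw [hsp]
        have h22 : (2 : ℝ) ≤ 2 ^ p.toReal := by
          calc (2 : ℝ) = 2 ^ (1 : ℝ) := (Real.rpow_one 2).symm
            _ ≤ 2 ^ p.toReal := Real.rpow_le_rpow_of_exponent_le (by norm_num) hpt
        exact mul_le_mul_of_nonneg_right h22 (Real.rpow_pos_of_pos (by linarith) _).le
      rw [hnorm, ← hsplit]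
      calc _ < (ε / 2) ^ p.toReal + (ε / 2) ^ p.toReal :=
            add_lt_add_of_lt_of_le hheadb (le_of_lt htailb)
        _ = 2 * (ε / 2) ^ p.toReal := by ring
        _ ≤ ε ^ p.toReal := h2
    by_contra hcon
    push_neg at hcon
    have := Real.rpow_le_rpow (by linarith) hcon hpt0.le
    linarith
  calc (0 : ℝ≥0∞) < m' (C ∩ T N) := hpos
    _ = m (ι ⁻¹' (C ∩ T N)) := by
        rw [hm', Measure.map_apply hιm (hCm.inter (hTm N))]
    _ ≤ m U := measure_mono hincl

set_option maxHeartbeats 1000000 in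
private lemma ergodic_main (hp : p ≠ ⊤) (hμn : ∀ n, IsProbabilityMeasure (μn n))
    (hB : ∀ (x : lp (fun _ : ℕ => 𝕂) p) (n : ℕ),
        (B x : ∀ _ : ℕ, 𝕂) n = w (n + 1) * (x : ∀ _ : ℕ, 𝕂) (n + 1))
    (hprod : ∀ (N : ℕ) (A : ℕ → Set 𝕂), (∀ n, MeasurableSet (A n)) →
        m {x : lp (fun _ : ℕ => 𝕂) p | ∀ n ≤ N, (x : ∀ _ : ℕ, 𝕂) n ∈ A n} =
          ∏ n ∈ Finset.range (N + 1), μn n (A n)) :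
    ∀ A : Set (lp (fun _ : ℕ => 𝕂) p), MeasurableSet A → B ⁻¹' A = A →
      m A = 0 ∨ m A = 1 := by
  classical
  intro A hA hBA
  set ι : lp (fun _ : ℕ => 𝕂) p → (ℕ → 𝕂) := fun x => (x : ∀ _ : ℕ, 𝕂) with hι
  have hιm : Measurable ι := (lp_coe_continuous p).measurable
  set m' := m.map ι with hm'
  haveI : IsProbabilityMeasure m' := Measure.isProbabilityMeasure_map hιm.aemeasurable
  set Tm : (ℕ → 𝕂) → (ℕ → 𝕂) := fun t n => w (n + 1) * t (n + 1) with hTmdef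
  have hcomm : ∀ x : lp (fun _ : ℕ => 𝕂) p, ι (B x) = Tm (ι x) := by
    intro x; funext n; exact hB x n
  have hcommn : ∀ (n : ℕ) (x : lp (fun _ : ℕ => 𝕂) p), ι ((⇑B)^[n] x) = Tm^[n] (ι x) := by
    intro n
    induction n with
    | zero => intro x; rfl
    | succ n ih =>
        intro x
        rw [Function.iterate_succ_apply, Function.iterate_succ_apply, ih (B x), hcomm x]
  have hAiter : ∀ n : ℕ, (⇑B)^[n] ⁻¹' A = A := by
    intro n
    induction n with
    | zero => rfl
    | succ n ih =>
        rw [Function.iterate_succ', Set.preimage_comp, hBA, ih]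
  obtain ⟨S, hS, hpre⟩ :=
    MeasurableSpace.measurableSet_comap.mp (lp_borel_le_comap p hp A hA)
  set s : ℕ → MeasurableSpace (ℕ → 𝕂) :=
    fun i => MeasurableSpace.comap (fun t : ℕ → 𝕂 => t i) inferInstance with hs
  have hsle : ∀ i, s i ≤ MeasurableSpace.pi := fun i => (measurable_pi_apply i).comap_le
  -- iterate formula
  have hTn : ∀ (n : ℕ) (t : ℕ → 𝕂) (k : ℕ),
      Tm^[n] t k = (∏ i ∈ Finset.Icc 1 n, w (k + i)) * t (k + n) := by
    intro n
    induction n with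
    | zero => intro t k; simp
    | succ n ih =>
        intro t k
        rw [Function.iterate_succ_apply, ih (Tm t) k]
        have h1 : (Tm t) (k + n) = w (k + n + 1) * t (k + n + 1) := rfl
        rw [h1, Finset.prod_Icc_succ_top (by omega : 1 ≤ n + 1)]
        have h2 : k + (n + 1) = k + n + 1 := by omega
        rw [h2]
        ring_nf
  -- iterate measurability wrt tail σ-algebras
  have hTnm : ∀ (n N : ℕ), N ≤ n →
      @Measurable (ℕ → 𝕂) (ℕ → 𝕂) (⨆ i ∈ Set.Ici N, s i) MeasurableSpace.pi (Tm^[n]) := by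
    intro n N hNn
    have hr : @Measurable (ℕ → 𝕂) (ℕ → 𝕂) (⨆ i ∈ Set.Ici N, s i) MeasurableSpace.pi
        (fun t k => t (k + n)) := by
      simp_rw [measurable_iff_comap_le, MeasurableSpace.pi, MeasurableSpace.comap_iSup,
        MeasurableSpace.comap_comp, Function.comp_def]
      exact iSup_le fun k => le_iSup₂ (f := fun i (_ : i ∈ Set.Ici N) => s i)
        (k + n) (by simp only [Set.mem_Ici]; omega)
    have hG : Measurable (fun u : ℕ → 𝕂 => fun k => (∏ i ∈ Finset.Icc 1 n, w (k + i)) * u k) :=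
      measurable_pi_iff.mpr fun k => (measurable_pi_apply k).const_mul _
    have heq : Tm^[n] = (fun u : ℕ → 𝕂 => fun k => (∏ i ∈ Finset.Icc 1 n, w (k + i)) * u k)
        ∘ (fun t : ℕ → 𝕂 => fun k => t (k + n)) := by
      funext t
      funext k
      exact hTn n t k
    rw [heq]
    exact hG.comp hr
  set U : ℕ → Set (ℕ → 𝕂) := fun M => ⋃ n ∈ Set.Ici M, (Tm^[n]) ⁻¹' S with hU
  have hUmeas : ∀ N M : ℕ, N ≤ M → MeasurableSet[⨆ i ∈ Set.Ici N, s i] (U M) := by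
    intro N M hNM
    refine MeasurableSet.biUnion (Set.to_countable _) (fun n hn => ?_)
    exact hTnm n N (le_trans hNM hn) hS
  have hUanti : ∀ M M' : ℕ, M ≤ M' → U M' ⊆ U M := by
    intro M M' h
    apply Set.iUnion₂_subset
    intro n hn
    exact Set.subset_iUnion₂ (s := fun n _ => (Tm^[n]) ⁻¹' S) n (le_trans h hn)
  -- tail measurability
  have hstar : MeasurableSet[Filter.limsup s atTop] (⋂ M, U M) := by
    rw [limsup_eq_iInf_iSup_of_nat]
    rw [MeasurableSpace.measurableSet_iInf]
    intro N
    have hshift : (⋂ M, U M) = ⋂ M, U (M + N) := by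
      apply le_antisymm
      · exact Set.subset_iInter fun M => Set.iInter_subset _ (M + N)
      · exact Set.subset_iInter fun M => (Set.iInter_subset _ M).trans (by exact
          (hUanti M (M + N) (by omega)))
    rw [hshift]
    exact MeasurableSet.iInter fun M => hUmeas N (M + N) (by omega)
  have h01 := ProbabilityTheory.measure_zero_or_one_of_measurableSet_limsup_atTop hsle
    (coords_iIndep p m μn hμn hprod) hstar
  -- pull back to A
  have hone : ∀ n : ℕ, ι ⁻¹' ((Tm^[n]) ⁻¹' S) = A := by
    intro n
    have : ι ⁻¹' ((Tm^[n]) ⁻¹' S) = (⇑B)^[n] ⁻¹' (ι ⁻¹' S) := by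
      ext x
      simp only [Set.mem_preimage]
      rw [← hcommn n x]
    rw [this, hpre, hAiter n]
  have hpull : ι ⁻¹' (⋂ M, U M) = A := by
    rw [Set.preimage_iInter]
    have h2 : ∀ M, ι ⁻¹' (U M) = A := by
      intro M
      rw [hU]
      dsimp only
      rw [Set.preimage_iUnion₂]
      ext x
      simp only [Set.mem_iUnion, Set.mem_Ici]
      constructor
      · rintro ⟨n, _, hx⟩
        rw [← hone n]
        exact hx
      · intro hx
        exact ⟨M, le_rfl, by rw [hone M]; exact hx⟩
    simp only [h2, Set.iInter_const]
  -- conclude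
  have hstarpi : MeasurableSet (⋂ M, U M) := by
    have hTmm : Measurable Tm := by
      rw [hTmdef]
      exact measurable_pi_iff.mpr fun n => ((measurable_pi_apply (n + 1)).const_mul _)
    exact MeasurableSet.iInter fun M => MeasurableSet.biUnion (Set.to_countable _)
      (fun n _ => (hTmm.iterate n) hS)
  have : m A = m' (⋂ M, U M) := by
    rw [hm', Measure.map_apply hιm hstarpi, hpull]
  rw [this]
  exact h01

end Meas

/-- If `∑ 1/|w₁⋯w_n|^p < ∞` and `m = ⊗ μ_n` is a `B_w`-invariant product
probability measure on `ℓ_p` whose first marginal `μ₀` has full support in `𝕂`, then `m` has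
full support and is ergodic for `B_w`. -/
theorem invariant_product_measure_ergodic_fullSupport
    {𝕂 : Type*} [RCLike 𝕂] [MeasurableSpace 𝕂] [BorelSpace 𝕂]
    (p : ℝ≥0∞) [Fact (1 ≤ p)] (hp : p ≠ ⊤)
    (w : ℕ → 𝕂) (hw0 : ∀ n, 1 ≤ n → w n ≠ 0) (hwbdd : ∃ M : ℝ, ∀ n, ‖w n‖ ≤ M)
    (hsum : Summable (fun n : ℕ =>
        (1 : ℝ) / ‖∏ i ∈ Finset.Icc 1 (n + 1), w i‖ ^ p.toReal))
    (B : lp (fun _ : ℕ => 𝕂) p →L[𝕂] lp (fun _ : ℕ => 𝕂) p)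
    (hB : ∀ (x : lp (fun _ : ℕ => 𝕂) p) (n : ℕ),
        (B x : ∀ _ : ℕ, 𝕂) n = w (n + 1) * (x : ∀ _ : ℕ, 𝕂) (n + 1))
    (m : Measure (lp (fun _ : ℕ => 𝕂) p)) [IsProbabilityMeasure m]
    (μn : ℕ → Measure 𝕂) (hμn : ∀ n, IsProbabilityMeasure (μn n))
    (hprod : ∀ (N : ℕ) (A : ℕ → Set 𝕂), (∀ n, MeasurableSet (A n)) →
        m {x : lp (fun _ : ℕ => 𝕂) p | ∀ n ≤ N, (x : ∀ _ : ℕ, 𝕂) n ∈ A n} =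
          ∏ n ∈ Finset.range (N + 1), μn n (A n))
    (hinv : ∀ A : Set (lp (fun _ : ℕ => 𝕂) p), MeasurableSet A → m (B ⁻¹' A) = m A)
    (hfull : ∀ U : Set 𝕂, IsOpen U → U.Nonempty → 0 < μn 0 U) :
    (∀ U : Set (lp (fun _ : ℕ => 𝕂) p), IsOpen U → U.Nonempty → 0 < m U) ∧
    (∀ A : Set (lp (fun _ : ℕ => 𝕂) p), MeasurableSet A → B ⁻¹' A = A →
      m A = 0 ∨ m A = 1) := by
  constructor
  · exact full_support_main p w B m μn hp hμn hw0 hB hprod hinv hfull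
  · exact ergodic_main p w B m μn hp hμn hB hprod
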